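/- Consider the network Σ(m) of classical conditioning gates with unit training time s, state X(t) = X̄ with X̄ ∈ {YES, OR}^n arbitrary, and a node (p,q). Applying the constant input sequence U(τ) = Û_{(p,q)} for τ = t, t+1, ..., t+s−1 yields x_{pq}(t+s) = x̄_{pq}(t) (the flipped value), and x_{ij}(t+s) = x_{ij}(t) for every node (i,j) with i ≤ p and (i,j) ≠ (p,q); that is, the flip of node (p,q) preserves the states of all other nodes in layer p and in all upstream layers 1, ..., p−1. -/

import Mathlib

/-- The state of a classical conditioning gate: logical YES or logical OR. -/
inductive GateState : Type
  | YES : GateState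
  | OR  : GateState
  deriving DecidableEq, Repr

/-- Output of a single classical conditioning gate:
`y = v` when the state is YES, and `y = v ∨ w` when the state is OR. -/
def gateOut : GateState → Bool → Bool → Bool
  | GateState.YES, v, _ => v
  | GateState.OR,  v, w => v || w

open Classical in
/-- A trajectory of a single classical conditioning gate with unit training time `s`,
inputs `v w : ℕ → Bool`, state `x : ℕ → GateState`, and output `y : ℕ → Bool`:
the output equation and the state-update equation of the model. -/
def GateTraj (s : ℕ) (v w : ℕ → Bool) (x : ℕ → GateState) (y : ℕ → Bool) : Prop :=
  (∀ t : ℕ, y t = gateOut (x t) (v t) (w t)) ∧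
  (∀ t : ℕ, x (t + 1) =
    if x (t + 1 - s) = GateState.YES ∧
        (∀ τ ∈ Finset.Icc (t + 1 - s) t, v τ = true ∧ w τ = true) then
      GateState.OR
    else if x (t + 1 - s) = GateState.OR ∧
        (∀ τ ∈ Finset.Icc (t + 1 - s) t, v τ = false ∧ w τ = true) then
      GateState.YES
    else
      x t)

/-- Output of node `(i,j)` of the binary-tree network `Σ(m)` of classical
conditioning gates, given the snapshot `X` of the gate states (`X i j` is the
state of node `(i,j)`, indices 1-based) and the external input `U` (1-based
ports: `v₁ⱼ = U (2j-1)`, `w₁ⱼ = U (2j)`).  Layer `0` is, by convention, the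
external ports themselves: `netY X U 0 k = U k`. -/
def netY (X : ℕ → ℕ → GateState) (U : ℕ → Bool) : ℕ → ℕ → Bool
  | 0, j => U j
  | i + 1, j => gateOut (X (i + 1) j) (netY X U i (2 * j - 1)) (netY X U i (2 * j))

/-- First input `v_{ij}` of node `(i,j)`: the output of node `(i-1, 2j-1)`
(for `i = 1`, the external port `2j-1`). -/
def nodeV (X : ℕ → ℕ → GateState) (U : ℕ → Bool) (i j : ℕ) : Bool :=
  netY X U (i - 1) (2 * j - 1)

/-- Second input `w_{ij}` of node `(i,j)`: the output of node `(i-1, 2j)`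
(for `i = 1`, the external port `2j`). -/
def nodeW (X : ℕ → ℕ → GateState) (U : ℕ → Bool) (i j : ℕ) : Bool :=
  netY X U (i - 1) (2 * j)

open Classical in
/-- A trajectory of the network `Σ(m)` of classical conditioning gates, all with
unit training time `s`: `U t k` is the external input at time `t` on port `k`
(`k = 1, …, 2^m`), and `X t i j` is the state of node `(i,j)` at time `t`
(`i = 1, …, m`, `j = 1, …, 2^(m-i)`).  Every node obeys the state-update
equation of the classical conditioning gate, its inputs being delivered by the
outputs of the previous layer (resp. the external input, for layer 1). -/
def NetTraj (m s : ℕ) (U : ℕ → ℕ → Bool) (X : ℕ → ℕ → ℕ → GateState) : Prop :=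
  ∀ i j : ℕ, 1 ≤ i → i ≤ m → 1 ≤ j → j ≤ 2 ^ (m - i) →
    ∀ t : ℕ, X (t + 1) i j =
      if X (t + 1 - s) i j = GateState.YES ∧
          (∀ τ ∈ Finset.Icc (t + 1 - s) t,
            nodeV (X τ) (U τ) i j = true ∧ nodeW (X τ) (U τ) i j = true) then
        GateState.OR
      else if X (t + 1 - s) i j = GateState.OR ∧
          (∀ τ ∈ Finset.Icc (t + 1 - s) t,
            nodeV (X τ) (U τ) i j = false ∧ nodeW (X τ) (U τ) i j = true) then
        GateState.YES
      else
        X t i j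

/-- The flipped value of a gate state. -/
def flipState : GateState → GateState
  | GateState.YES => GateState.OR
  | GateState.OR  => GateState.YES

/-- The training input value `Û_{(p,q)}` for flipping node `(p,q)` whose current
state is `xpq`: the external input (1-based ports `1, …, 2^m`) is divided into
`2^(m+1-p)` consecutive blocks of equal size `2^(p-1)`; block `2q-1` is
`(0,…,0)` if `xpq = OR` and `(1,0,…,0)` if `xpq = YES`, block `2q` is
`(1,0,…,0)`, and all other blocks are `(0,…,0)`. -/
def Uhat (p q : ℕ) (xpq : GateState) (k : ℕ) : Bool :=
  if (k - 1) / 2 ^ (p - 1) + 1 = 2 * q - 1 then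
    decide (xpq = GateState.YES) && decide ((k - 1) % 2 ^ (p - 1) = 0)
  else if (k - 1) / 2 ^ (p - 1) + 1 = 2 * q then
    decide ((k - 1) % 2 ^ (p - 1) = 0)
  else
    false


lemma uhat_false (p q : ℕ) (x : GateState) (k : ℕ)
    (h : (k - 1) % 2 ^ (p - 1) ≠ 0) : Uhat p q x k = false := by
  simp only [Uhat]
  split_ifs <;> simp [h]

lemma odd_mul_pow_mod (a b c : ℕ) (h : a < b) : 2 ^ a * (2 * c + 1) % 2 ^ b ≠ 0 := by
  intro h0
  have hdvd : 2 ^ b ∣ 2 ^ a * (2 * c + 1) := Nat.dvd_of_mod_eq_zero h0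
  rw [show b = a + (b - a) from by omega, pow_add] at hdvd
  have h1 : 2 ^ (b - a) ∣ 2 * c + 1 :=
    (Nat.mul_dvd_mul_iff_left (pow_pos (by norm_num : (0:ℕ) < 2) a)).mp hdvd
  have h2 : (2 : ℕ) ∣ 2 * c + 1 := (dvd_pow_self 2 (by omega : b - a ≠ 0)).trans h1
  omega

lemma uhat_block (p q : ℕ) (x : GateState) (b : ℕ) :
    Uhat p q x (2 ^ (p - 1) * b + 1) =
      if b + 1 = 2 * q - 1 then decide (x = GateState.YES)
      else if b + 1 = 2 * q then true else false := by
  simp only [Uhat, Nat.add_sub_cancel,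
    Nat.mul_div_cancel_left _ (pow_pos (by norm_num : (0:ℕ) < 2) (p - 1)),
    Nat.mul_mod_right]
  split_ifs <;> simp

lemma netY_uhat (p q : ℕ) (x : GateState) (U : ℕ → Bool) (X : ℕ → ℕ → GateState) :
    ∀ i, i < p → ∀ j', (∀ k, 2 ^ i * j' + 1 ≤ k → k ≤ 2 ^ i * (j' + 1) →
      U k = Uhat p q x k) →
    netY X U i (j' + 1) = Uhat p q x (2 ^ i * j' + 1) := by
  intro i
  induction i with
  | zero =>
    intro _ j' h
    simpa [netY] using h (j' + 1) (by simp) (by simp)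
  | succ i ih =>
    intro hi j' h
    have e1 : 2 ^ (i + 1) * j' = 2 ^ i * (2 * j') := by rw [pow_succ]; ring
    have e2 : 2 ^ (i + 1) * (j' + 1) = 2 ^ i * (2 * j' + 2) := by rw [pow_succ]; ring
    have e3 : 2 ^ i * (2 * j' + 1) ≤ 2 ^ i * (2 * j' + 2) :=
      Nat.mul_le_mul_left _ (by omega)
    have e4 : 2 ^ i * (2 * j') ≤ 2 ^ i * (2 * j' + 1) :=
      Nat.mul_le_mul_left _ (by omega)
    have hL := ih (by omega) (2 * j') (fun k hk1 hk2 =>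
      h k (by rw [e1]; exact hk1) (by rw [e2]; omega))
    have hR := ih (by omega) (2 * j' + 1) (fun k hk1 hk2 =>
      h k (by rw [e1]; omega) (by rw [e2]; exact hk2))
    have hwf : Uhat p q x (2 ^ i * (2 * j' + 1) + 1) = false := by
      apply uhat_false
      simpa using odd_mul_pow_mod i (p - 1) j' (by omega)
    simp only [netY]
    rw [show 2 * (j' + 1) - 1 = 2 * j' + 1 from by omega,
        show 2 * (j' + 1) = (2 * j' + 1) + 1 from by omega]
    rw [show 2 * j' + 1 = (2 * j') + 1 from rfl] at hL ⊢
    rw [hL, hR, hwf, e1]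
    cases X (i + 1) (j' + 1) <;> simp [gateOut]

/-- for the network `Σ(m)` with unit training time `s ≥ 1`,
arbitrary state at an arbitrary time `t`, and any node `(p,q)`, applying the
constant input sequence `U(τ) = Û_{(p,q)}` for `τ = t, t+1, …, t+s-1` flips the
state of node `(p,q)` at time `t+s` while preserving the state of every node
`(i,j)` with `i ≤ p` and `(i,j) ≠ (p,q)` (all other nodes of layer `p` and all
nodes of the upstream layers `1, …, p-1`). -/
theorem stmt10 (m s : ℕ) (hm : 1 ≤ m) (hs : 1 ≤ s) (p q : ℕ)
    (hp : 1 ≤ p) (hpm : p ≤ m) (hq : 1 ≤ q) (hqn : q ≤ 2 ^ (m - p))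
    (U : ℕ → ℕ → Bool) (X : ℕ → ℕ → ℕ → GateState)
    (hnet : NetTraj m s U X) (t : ℕ)
    (hU : ∀ r : ℕ, r < s → ∀ k : ℕ, 1 ≤ k → k ≤ 2 ^ m →
      U (t + r) k = Uhat p q (X t p q) k) :
    X (t + s) p q = flipState (X t p q) ∧
    ∀ i j : ℕ, 1 ≤ i → i ≤ p → 1 ≤ j → j ≤ 2 ^ (m - i) → (i, j) ≠ (p, q) →
      X (t + s) i j = X t i j := by
  -- value of the second input of any node (i'+1, j''+1) with i'+1 ≤ p
  have wval : ∀ r, r < s → ∀ i' j'', i' + 1 ≤ p → j'' + 1 ≤ 2 ^ (m - (i' + 1)) →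
      nodeW (X (t + r)) (U (t + r)) (i' + 1) (j'' + 1) =
        Uhat p q (X t p q) (2 ^ i' * (2 * j'' + 1) + 1) := by
    intro r hr i' j'' hip hjn
    have hb : 2 ^ i' * (2 * j'' + 2) ≤ 2 ^ m := by
      have e : 2 ^ i' * (2 * j'' + 2) = 2 ^ (i' + 1) * (j'' + 1) := by rw [pow_succ]; ring
      rw [e]
      calc 2 ^ (i' + 1) * (j'' + 1) ≤ 2 ^ (i' + 1) * 2 ^ (m - (i' + 1)) :=
            Nat.mul_le_mul_left _ hjn
        _ = 2 ^ m := by rw [← pow_add]; congr 1; omega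
    simp only [nodeW, Nat.add_sub_cancel]
    rw [show 2 * (j'' + 1) = (2 * j'' + 1) + 1 from by omega]
    exact netY_uhat p q (X t p q) (U (t + r)) (X (t + r)) i' (by omega) (2 * j'' + 1)
      (fun k hk1 hk2 => hU r hr k (by omega) (le_trans hk2 hb))
  -- value of the first input of node (p, q)
  have vval : ∀ r, r < s →
      nodeV (X (t + r)) (U (t + r)) p q = decide (X t p q = GateState.YES) := by
    intro r hr
    obtain ⟨q'', hq'⟩ : ∃ q'', q = q'' + 1 := ⟨q - 1, by omega⟩
    have hb : 2 ^ (p - 1) * (2 * q'' + 1) ≤ 2 ^ m := by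
      have epow : 2 ^ (p - 1) * 2 = 2 ^ p := by
        rw [← pow_succ, Nat.sub_add_cancel hp]
      have e : 2 ^ (p - 1) * (2 * q'' + 2) = 2 ^ p * (q'' + 1) := by
        rw [← epow]; ring
      have e3 : 2 ^ (p - 1) * (2 * q'' + 1) ≤ 2 ^ (p - 1) * (2 * q'' + 2) :=
        Nat.mul_le_mul_left _ (by omega)
      have hb2 : 2 ^ p * (q'' + 1) ≤ 2 ^ m := by
        rw [← hq'] at *
        calc 2 ^ p * q ≤ 2 ^ p * 2 ^ (m - p) := Nat.mul_le_mul_left _ hqn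
          _ = 2 ^ m := by rw [← pow_add]; congr 1; omega
      omega
    simp only [nodeV]
    rw [show 2 * q - 1 = (2 * q'') + 1 from by omega]
    rw [netY_uhat p q (X t p q) (U (t + r)) (X (t + r)) (p - 1) (by omega) (2 * q'')
      (fun k hk1 hk2 => hU r hr k (by omega)
        (le_trans hk2 (by
          have e4 : 2 ^ (p - 1) * (2 * q'' + 0 + 1) ≤ 2 ^ (p - 1) * (2 * q'' + 1) :=
            Nat.mul_le_mul_left _ (by omega)
          omega)))]
    rw [uhat_block]
    rw [if_pos (by omega : 2 * q'' + 1 = 2 * q - 1)]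
  -- the second input of node (p, q) is always true
  have wq : ∀ r, r < s → nodeW (X (t + r)) (U (t + r)) p q = true := by
    intro r hr
    obtain ⟨p', hp'⟩ : ∃ p', p = p' + 1 := ⟨p - 1, by omega⟩
    obtain ⟨q'', hq'⟩ : ∃ q'', q = q'' + 1 := ⟨q - 1, by omega⟩
    have := wval r hr p' q'' (by omega) (by rw [← hp', ← hq']; exact hqn)
    rw [← hp', ← hq'] at this
    rw [this, show (2:ℕ) ^ p' = 2 ^ (p - 1) from by rw [hp', Nat.add_sub_cancel],
      uhat_block, if_neg (by omega), if_pos (by omega)]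
  -- the second input of any other node (i,j) with i ≤ p is always false
  have wother : ∀ r, r < s → ∀ i j, 1 ≤ i → i ≤ p → 1 ≤ j → j ≤ 2 ^ (m - i) →
      (i, j) ≠ (p, q) → nodeW (X (t + r)) (U (t + r)) i j = false := by
    intro r hr i j hi hip hj hjn hne
    obtain ⟨i', hi'⟩ : ∃ i', i = i' + 1 := ⟨i - 1, by omega⟩
    obtain ⟨j'', hj'⟩ : ∃ j'', j = j'' + 1 := ⟨j - 1, by omega⟩
    have hw := wval r hr i' j'' (by omega) (by rw [← hi', ← hj']; exact hjn)
    rw [← hi', ← hj'] at hw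
    rw [hw]
    rcases lt_or_eq_of_le hip with hlt | heq
    · apply uhat_false
      simpa using odd_mul_pow_mod i' (p - 1) j'' (by omega)
    · have hjq : j ≠ q := by
        intro h; exact hne (by rw [heq, h])
      rw [show i' = p - 1 from by omega, uhat_block]
      rw [if_neg (by omega), if_neg (by omega)]
  -- preservation of all nodes other than (p,q) in layers ≤ p
  have pres : ∀ i j, 1 ≤ i → i ≤ p → 1 ≤ j → j ≤ 2 ^ (m - i) → (i, j) ≠ (p, q) →
      ∀ r, r ≤ s → X (t + r) i j = X t i j := by
    intro i j hi hip hj hjn hne r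
    induction r with
    | zero => intro _; rfl
    | succ r ih =>
      intro hrs
      have hupd := hnet i j hi (le_trans hip hpm) hj hjn (t + r)
      have hwf := wother r (by omega) i j hi hip hj hjn hne
      have hmem : t + r ∈ Finset.Icc (t + r + 1 - s) (t + r) := by
        rw [Finset.mem_Icc]; omega
      rw [show t + (r + 1) = t + r + 1 from by omega, hupd,
        if_neg (fun hc => by
          have := (hc.2 (t + r) hmem).2
          rw [hwf] at this; exact absurd this (by simp)),
        if_neg (fun hc => by
          have := (hc.2 (t + r) hmem).2
          rw [hwf] at this; exact absurd this (by simp))]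
      exact ih (by omega)
  constructor
  · -- the flip of node (p, q)
    have hupd := hnet p q hp hpm hq hqn (t + s - 1)
    rw [show t + s - 1 + 1 = t + s from by omega] at hupd
    rw [show t + s - s = t from by omega] at hupd
    have hIcc : ∀ τ ∈ Finset.Icc t (t + s - 1), ∃ r, r < s ∧ τ = t + r := by
      intro τ hτ
      rw [Finset.mem_Icc] at hτ
      exact ⟨τ - t, by omega, by omega⟩
    cases hx : X t p q with
    | YES =>
      rw [hx] at hupd
      rw [hupd, if_pos]
      · rfl
      · refine ⟨rfl, fun τ hτ => ?_⟩
        obtain ⟨r, hr, rfl⟩ := hIcc τ hτ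
        refine ⟨?_, wq r hr⟩
        rw [vval r hr, hx]
        simp
    | OR =>
      rw [hx] at hupd
      rw [hupd, if_neg, if_pos]
      · rfl
      · refine ⟨rfl, fun τ hτ => ?_⟩
        obtain ⟨r, hr, rfl⟩ := hIcc τ hτ
        refine ⟨?_, wq r hr⟩
        rw [vval r hr, hx]
        simp
      · rintro ⟨hy, -⟩
        exact absurd hy (by simp)
  · intro i j hi hip hj hjn hne
    exact pres i j hi hip hj hjn hne s le_rfl
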